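/- Let 0 < δ < 1, let η_n > 0 be a sequence with n^{1/2} η_n → ∞, and for each n let a_{n,S}*, a_{n,H}*, a_{n,A}* be the unique nonnegative solutions of Φ(n^{1/2}(a − η_n)) − Φ(n^{1/2}(−a − η_n)) = δ, Φ(n^{1/2}(a − η_n)) − Φ(−n^{1/2} a) = δ, and Φ(n^{1/2}(a − η_n)) − Φ(−n^{1/2} sqrt(a² + η_n²)) = δ, respectively. Then a_{n,S}* = η_n + n^{−1/2} Φ^{−1}(δ) + o(n^{−1/2}), a_{n,H}* = η_n + n^{−1/2} Φ^{−1}(δ) + o(n^{−1/2}), and a_{n,A}* = η_n + n^{−1/2} Φ^{−1}(δ) + o(n^{−1/2}) as n → ∞; in particular each of n^{1/2} a_{n,S}*/Φ^{−1}((1+δ)/2), n^{1/2} a_{n,H}*/Φ^{−1}((1+δ)/2), n^{1/2} a_{n,A}*/Φ^{−1}((1+δ)/2) diverges to infinity. -/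

import Mathlib

open MeasureTheory ProbabilityTheory Filter
open scoped NNReal

/-- Standard normal cumulative distribution function Φ. -/
noncomputable def stdNormCDF (x : ℝ) : ℝ :=
  ((gaussianReal 0 1) (Set.Iic x)).toReal

/-- Soft-thresholding (LASSO) estimator with threshold η, as a function of ȳ. -/
noncomputable def softThresh (η y : ℝ) : ℝ := Real.sign y * max (|y| - η) 0

/-- Hard-thresholding estimator with threshold η, as a function of ȳ. -/
noncomputable def hardThresh (η y : ℝ) : ℝ := if η < |y| then y else 0

/-- Adaptive LASSO estimator with tuning parameter η, as a function of ȳ. -/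
noncomputable def adaLasso (η y : ℝ) : ℝ := if |y| ≤ η then 0 else y - η ^ 2 / y

/-- Coverage probability `P_{n,θ}(θ ∈ [est(ȳ) - a, est(ȳ) + b])` in the
known-variance case (σ = 1), where ȳ ~ N(θ, 1/n). -/
noncomputable def cover (n : ℕ) (est : ℝ → ℝ) (a b θ : ℝ) : ℝ :=
  ((gaussianReal θ ((n : ℝ≥0))⁻¹)
    {y : ℝ | est y - a ≤ θ ∧ θ ≤ est y + b}).toReal

/-- The inverse Φ⁻¹ of the standard normal cumulative distribution function. -/
noncomputable def stdNormCDFInv : ℝ → ℝ := Function.invFun stdNormCDF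


section SncdfHelpers

lemma sncdf_eq (x : ℝ) : stdNormCDF x = ∫ t in Set.Iic x, gaussianPDFReal 0 1 t := by
  rw [stdNormCDF, gaussianReal_apply_eq_integral 0 one_ne_zero,
    ENNReal.toReal_ofReal (integral_nonneg fun t => gaussianPDFReal_nonneg 0 1 t)]

lemma sncdf_sub (x y : ℝ) :
    stdNormCDF y - stdNormCDF x = ∫ t in x..y, gaussianPDFReal 0 1 t := by
  rw [sncdf_eq, sncdf_eq]
  exact intervalIntegral.integral_Iic_sub_Iic (integrable_gaussianPDFReal 0 1).integrableOn
    (integrable_gaussianPDFReal 0 1).integrableOn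

lemma sncdf_mono : StrictMono stdNormCDF := by
  intro x y hxy
  have h := sncdf_sub x y
  have h2 : 0 < ∫ t in x..y, gaussianPDFReal 0 1 t :=
    intervalIntegral.intervalIntegral_pos_of_pos
      (integrable_gaussianPDFReal 0 1).intervalIntegrable
      (fun t => gaussianPDFReal_pos 0 1 t one_ne_zero) hxy
  linarith

lemma sncdf_cont : Continuous stdNormCDF := by
  have he : stdNormCDF = fun x => stdNormCDF 0 + ∫ t in (0:ℝ)..x, gaussianPDFReal 0 1 t :=
    funext fun x => by have := sncdf_sub 0 x; linarith
  rw [he]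
  exact continuous_const.add ((integrable_gaussianPDFReal 0 1).continuous_primitive 0)

lemma sncdf_atBot : Tendsto stdNormCDF atBot (nhds 0) := by
  have h : Tendsto (fun x : ℝ => ∫ t in x..(0:ℝ), gaussianPDFReal 0 1 t) atBot
      (nhds (∫ t in Set.Iic (0:ℝ), gaussianPDFReal 0 1 t)) :=
    intervalIntegral_tendsto_integral_Iic 0 (integrable_gaussianPDFReal 0 1).integrableOn
      tendsto_id
  have h2 := (tendsto_const_nhds (α := ℝ) (f := atBot) (x := stdNormCDF 0)).sub h
  have h3 : stdNormCDF 0 - ∫ t in Set.Iic (0:ℝ), gaussianPDFReal 0 1 t = 0 := by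
    rw [sncdf_eq]; ring
  rw [h3] at h2
  refine h2.congr fun x => ?_
  have := sncdf_sub x 0; linarith

lemma sncdf_atTop : Tendsto stdNormCDF atTop (nhds 1) := by
  have h : Tendsto (fun x : ℝ => ∫ t in (0:ℝ)..x, gaussianPDFReal 0 1 t) atTop
      (nhds (∫ t in Set.Ioi (0:ℝ), gaussianPDFReal 0 1 t)) :=
    intervalIntegral_tendsto_integral_Ioi 0 (integrable_gaussianPDFReal 0 1).integrableOn
      tendsto_id
  have h2 := (tendsto_const_nhds (α := ℝ) (f := atTop) (x := stdNormCDF 0)).add h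
  have h3 : stdNormCDF 0 + ∫ t in Set.Ioi (0:ℝ), gaussianPDFReal 0 1 t = 1 := by
    rw [sncdf_eq, intervalIntegral.integral_Iic_add_Ioi
      (integrable_gaussianPDFReal 0 1).integrableOn
      (integrable_gaussianPDFReal 0 1).integrableOn]
    exact integral_gaussianPDFReal_eq_one 0 one_ne_zero
  rw [h3] at h2
  refine h2.congr fun x => ?_
  have := sncdf_sub 0 x; linarith

lemma sncdf_zero : stdNormCDF 0 = 1 / 2 := by
  have heven : ∀ t : ℝ, gaussianPDFReal 0 1 (-t) = gaussianPDFReal 0 1 t := by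
    intro t
    simp [gaussianPDFReal, neg_sq]
  have h1 : ∫ t in Set.Iic (0:ℝ), gaussianPDFReal 0 1 t
      = ∫ t in Set.Ioi (0:ℝ), gaussianPDFReal 0 1 t := by
    rw [← neg_zero, ← integral_comp_neg_Ioi]
    simp only [heven, neg_zero]
  have h2 : stdNormCDF 0 + ∫ t in Set.Ioi (0:ℝ), gaussianPDFReal 0 1 t = 1 := by
    rw [sncdf_eq, intervalIntegral.integral_Iic_add_Ioi
      (integrable_gaussianPDFReal 0 1).integrableOn
      (integrable_gaussianPDFReal 0 1).integrableOn]
    exact integral_gaussianPDFReal_eq_one 0 one_ne_zero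
  rw [sncdf_eq] at *
  linarith

lemma sncdf_nonneg (x : ℝ) : 0 ≤ stdNormCDF x := ENNReal.toReal_nonneg

lemma sncdf_inv_eq {p : ℝ} (h0 : 0 < p) (h1 : p < 1) : stdNormCDF (stdNormCDFInv p) = p := by
  apply Function.invFun_eq
  obtain ⟨x₀, hx₀⟩ := (sncdf_atBot.eventually_lt_const h0).exists
  obtain ⟨x₁, hx₁⟩ := (sncdf_atTop.eventually_const_lt h1).exists
  have hx : x₀ ≤ x₁ := by
    by_contra h
    push_neg at h
    exact absurd (sncdf_mono h) (by linarith)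
  obtain ⟨x, _, hx⟩ := intermediate_value_Icc hx sncdf_cont.continuousOn
    ⟨le_of_lt hx₀, le_of_lt hx₁⟩
  exact ⟨x, hx⟩

lemma tendsto_of_sncdf {x : ℕ → ℝ} {t : ℝ}
    (h : Tendsto (fun n => stdNormCDF (x n)) atTop (nhds (stdNormCDF t))) :
    Tendsto x atTop (nhds t) := by
  rw [tendsto_order]
  constructor
  · intro a ha
    filter_upwards [h.eventually_const_lt (sncdf_mono ha)] with n hn
    exact sncdf_mono.lt_iff_lt.mp hn
  · intro a ha
    filter_upwards [h.eventually_lt_const (sncdf_mono ha)] with n hn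
    exact sncdf_mono.lt_iff_lt.mp hn

lemma sncdf_main_aux {δ : ℝ} (hδ0 : 0 < δ) (hδ1 : δ < 1) {x c : ℕ → ℝ}
    (heq : ∀ᶠ n in atTop, stdNormCDF (x n) = δ + stdNormCDF (c n))
    (hc : Tendsto c atTop atBot) :
    Tendsto x atTop (nhds (stdNormCDFInv δ)) := by
  have h1 : Tendsto (fun n => stdNormCDF (c n)) atTop (nhds 0) := sncdf_atBot.comp hc
  have h2 : Tendsto (fun n => δ + stdNormCDF (c n)) atTop (nhds (δ + 0)) :=
    tendsto_const_nhds.add h1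
  rw [add_zero] at h2
  have h3 : Tendsto (fun n => stdNormCDF (x n)) atTop (nhds δ) :=
    h2.congr' (heq.mono fun n h => h.symm)
  apply tendsto_of_sncdf
  rwa [sncdf_inv_eq hδ0 hδ1]

lemma sncdf_solve_tendsto {δ : ℝ} (hδ0 : 0 < δ) (hδ1 : δ < 1) {η : ℕ → ℝ}
    (hη : ∀ n, 0 < η n)
    (hηe : Tendsto (fun n : ℕ => Real.sqrt n * η n) atTop atTop)
    {a : ℕ → ℝ} {k : ℝ} (hk : 1 ≤ k)
    (heq : ∀ n : ℕ, 1 ≤ n →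
      stdNormCDF (Real.sqrt n * (a n - η n)) = δ +
        stdNormCDF (-(Real.sqrt n * (a n - η n)) - k * (Real.sqrt n * η n))) :
    Tendsto (fun n : ℕ => Real.sqrt n * (a n - η n)) atTop (nhds (stdNormCDFInv δ)) := by
  set L := stdNormCDFInv δ with hL
  have hxge : ∀ n : ℕ, 1 ≤ n → L ≤ Real.sqrt n * (a n - η n) := by
    intro n hn
    have h1 := heq n hn
    have h2 : stdNormCDF L ≤ stdNormCDF (Real.sqrt n * (a n - η n)) := by
      rw [sncdf_inv_eq hδ0 hδ1, h1]
      have := sncdf_nonneg (-(Real.sqrt n * (a n - η n)) - k * (Real.sqrt n * η n))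
      linarith
    exact sncdf_mono.le_iff_le.mp h2
  have hc : Tendsto (fun n : ℕ =>
      -(Real.sqrt n * (a n - η n)) - k * (Real.sqrt n * η n)) atTop atBot := by
    apply tendsto_atBot_mono' atTop
      (f₁ := fun n : ℕ => -(Real.sqrt n * η n) + -L)
    · filter_upwards [eventually_ge_atTop 1] with n hn
      have h1 := hxge n hn
      have hs : 0 ≤ Real.sqrt n * η n :=
        mul_nonneg (Real.sqrt_nonneg _) (hη n).le
      nlinarith
    · exact tendsto_atBot_add_const_right _ (-L)
        (tendsto_neg_atTop_atBot.comp hηe)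
  exact sncdf_main_aux hδ0 hδ1 (eventually_atTop.2 ⟨1, heq⟩) hc

end SncdfHelpers

/-- Asymptotic behavior of the half-lengths of the shortest δ-level intervals in the
sparse-tuning regime `√n η_n → ∞`: `a* = η_n + n^{-1/2} Φ⁻¹(δ) + o(n^{-1/2})`, and the
ratio to the half-length of the standard interval diverges. -/
theorem stmt_11 (δ : ℝ) (hδ0 : 0 < δ) (hδ1 : δ < 1) (η : ℕ → ℝ) (hη : ∀ n, 0 < η n)
    (hηe : Tendsto (fun n : ℕ => Real.sqrt n * η n) atTop atTop)
    (aS aH aA : ℕ → ℝ)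
    (haS : ∀ n, 0 ≤ aS n) (haH : ∀ n, 0 ≤ aH n) (haA : ∀ n, 0 ≤ aA n)
    (heqS : ∀ n : ℕ, 1 ≤ n →
      stdNormCDF (Real.sqrt n * (aS n - η n)) -
        stdNormCDF (Real.sqrt n * (-aS n - η n)) = δ)
    (heqH : ∀ n : ℕ, 1 ≤ n →
      stdNormCDF (Real.sqrt n * (aH n - η n)) - stdNormCDF (-(Real.sqrt n * aH n)) = δ)
    (heqA : ∀ n : ℕ, 1 ≤ n →
      stdNormCDF (Real.sqrt n * (aA n - η n)) -
        stdNormCDF (-(Real.sqrt n * Real.sqrt (aA n ^ 2 + η n ^ 2))) = δ) :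
    -- `a* = η_n + n^{-1/2} Φ⁻¹(δ) + o(n^{-1/2})`, i.e. `√n (a* - η_n) → Φ⁻¹(δ)`
    Tendsto (fun n : ℕ => Real.sqrt n * (aS n - η n)) atTop (nhds (stdNormCDFInv δ)) ∧
    Tendsto (fun n : ℕ => Real.sqrt n * (aH n - η n)) atTop (nhds (stdNormCDFInv δ)) ∧
    Tendsto (fun n : ℕ => Real.sqrt n * (aA n - η n)) atTop (nhds (stdNormCDFInv δ)) ∧
    -- the ratios to the half-length `n^{-1/2} Φ⁻¹((1+δ)/2)` of the standard
    -- interval diverge to infinity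
    Tendsto (fun n : ℕ => Real.sqrt n * aS n / stdNormCDFInv ((1 + δ) / 2)) atTop atTop ∧
    Tendsto (fun n : ℕ => Real.sqrt n * aH n / stdNormCDFInv ((1 + δ) / 2)) atTop atTop ∧
    Tendsto (fun n : ℕ => Real.sqrt n * aA n / stdNormCDFInv ((1 + δ) / 2)) atTop atTop := by
  
  have hS : Tendsto (fun n : ℕ => Real.sqrt n * (aS n - η n)) atTop
      (nhds (stdNormCDFInv δ)) := by
    refine sncdf_solve_tendsto hδ0 hδ1 hη hηe (k := 2) (by norm_num) fun n hn => ?_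
    have h := heqS n hn
    have harg : Real.sqrt n * (-aS n - η n)
        = -(Real.sqrt n * (aS n - η n)) - 2 * (Real.sqrt n * η n) := by ring
    rw [harg] at h
    linarith
  have hH : Tendsto (fun n : ℕ => Real.sqrt n * (aH n - η n)) atTop
      (nhds (stdNormCDFInv δ)) := by
    refine sncdf_solve_tendsto hδ0 hδ1 hη hηe (k := 1) le_rfl fun n hn => ?_
    have h := heqH n hn
    have harg : -(Real.sqrt n * aH n)
        = -(Real.sqrt n * (aH n - η n)) - 1 * (Real.sqrt n * η n) := by ring
    rw [harg] at h
    linarith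
  have hA : Tendsto (fun n : ℕ => Real.sqrt n * (aA n - η n)) atTop
      (nhds (stdNormCDFInv δ)) := by
    refine sncdf_main_aux hδ0 hδ1 (x := fun n => Real.sqrt n * (aA n - η n))
      (c := fun n => -(Real.sqrt n * Real.sqrt (aA n ^ 2 + η n ^ 2)))
      (eventually_atTop.2 ⟨1, fun n hn => by have := heqA n hn; linarith⟩) ?_
    apply tendsto_atBot_mono' atTop (f₁ := fun n : ℕ => -(Real.sqrt n * η n))
    · filter_upwards with n
      have h1 : η n ≤ Real.sqrt (aA n ^ 2 + η n ^ 2) := by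
        have h1 := Real.sqrt_le_sqrt (show η n ^ 2 ≤ aA n ^ 2 + η n ^ 2 by nlinarith)
        rwa [Real.sqrt_sq (hη n).le] at h1
      have := mul_le_mul_of_nonneg_left h1 (Real.sqrt_nonneg (n : ℝ))
      linarith
    · exact tendsto_neg_atTop_atBot.comp hηe
  have hLpos : 0 < stdNormCDFInv ((1 + δ) / 2) := by
    by_contra h
    push_neg at h
    have h1 : stdNormCDF (stdNormCDFInv ((1 + δ) / 2)) = (1 + δ) / 2 :=
      sncdf_inv_eq (by linarith) (by linarith)
    have h2 : stdNormCDF (stdNormCDFInv ((1 + δ) / 2)) ≤ stdNormCDF 0 :=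
      sncdf_mono.monotone h
    rw [h1, sncdf_zero] at h2
    linarith
  have key : ∀ (a : ℕ → ℝ),
      Tendsto (fun n : ℕ => Real.sqrt n * (a n - η n)) atTop (nhds (stdNormCDFInv δ)) →
      Tendsto (fun n : ℕ => Real.sqrt n * a n / stdNormCDFInv ((1 + δ) / 2))
        atTop atTop := by
    intro a ha
    have h1 : Tendsto (fun n : ℕ => Real.sqrt n * (a n - η n) + Real.sqrt n * η n)
        atTop atTop := ha.add_atTop hηe
    have h2 : Tendsto (fun n : ℕ => Real.sqrt n * a n) atTop atTop :=
      h1.congr fun n => by ring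
    exact h2.atTop_div_const hLpos
  exact ⟨hS, hH, hA, key aS hS, key aH hH, key aA hA⟩
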